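/- Let {(σ_n, v_n, u_n)}_{n∈ℕ} be a singular system for the compact linear operator K : X → Y such that (u_n) spans the closure of the range of K and (v_n) spans the closure of the range of K*. Let α > 0 and c₂ > 0 satisfy σ_n² ≤ c₂ α for all n. If x = K* K z for some z ∈ X, then the ℓ¹-SVD reconstruction error from exact data satisfies ‖ ∑_n (1/σ_n²) S_α(σ_n ⟨K x, u_n⟩) v_n − x ‖ ≤ c₂ α ‖z‖. -/

import Mathlib

open scoped InnerProductSpace

/-- The soft thresholding function `S_α`. -/
noncomputable def softThresh (α t : ℝ) : ℝ :=
  if t ≤ -(α / 2) then t + α / 2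
  else if α / 2 ≤ t then t - α / 2
  else 0

lemma abs_softThresh_sub_le (α t : ℝ) (hα : 0 ≤ α) : |softThresh α t - t| ≤ |t| := by
  unfold softThresh
  split_ifs with h1 h2
  · rw [show t + α / 2 - t = α / 2 by ring]
    rcases abs_cases (α/2) with ⟨h,_⟩|⟨h,_⟩ <;> rcases abs_cases t with ⟨h',_⟩|⟨h',_⟩ <;> linarith
  · rw [show t - α / 2 - t = -(α / 2) by ring]
    rcases abs_cases (-(α/2)) with ⟨h,_⟩|⟨h,_⟩ <;> rcases abs_cases t with ⟨h',_⟩|⟨h',_⟩ <;> linarith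
  · simp

/-- If `σ_n² ≤ c₂ α` for all `n` and `x = K* K z`, then the `ℓ¹`-SVD reconstruction error
from exact data satisfies `‖∑ (1/σ_n²) S_α(σ_n ⟨K x, u_n⟩) v_n − x‖ ≤ c₂ α ‖z‖`. -/
theorem l1SVD_error_estimate_range_adjoint_comp {X Y : Type*}
    [NormedAddCommGroup X] [InnerProductSpace ℝ X] [CompleteSpace X]
    [NormedAddCommGroup Y] [InnerProductSpace ℝ Y] [CompleteSpace Y]
    (K : X →L[ℝ] Y) (hK : IsCompactOperator K)
    (σ : ℕ → ℝ) (v : ℕ → X) (u : ℕ → Y)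
    (hσ : ∀ n, 0 < σ n) (hv : Orthonormal ℝ v) (hu : Orthonormal ℝ u)
    (hKv : ∀ n, K (v n) = σ n • u n)
    (hKadj : ∀ n, (ContinuousLinearMap.adjoint K) (u n) = σ n • v n)
    (huspan : (Submodule.span ℝ (Set.range u)).topologicalClosure
      = (LinearMap.range (K : X →ₗ[ℝ] Y)).topologicalClosure)
    (hvspan : (Submodule.span ℝ (Set.range v)).topologicalClosure
      = (LinearMap.range ((ContinuousLinearMap.adjoint K : Y →L[ℝ] X) : Y →ₗ[ℝ] X)).topologicalClosure)
    (α : ℝ) (hα : 0 < α) (c₂ : ℝ) (hc₂ : 0 < c₂)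
    (hσb : ∀ n, σ n ^ 2 ≤ c₂ * α)
    (z : X) (x : X) (hx : x = ContinuousLinearMap.adjoint K (K z)) :
    ‖(∑' n, ((σ n ^ 2)⁻¹ * softThresh α (σ n * ⟪K x, u n⟫_ℝ)) • v n) - x‖
      ≤ c₂ * α * ‖z‖ := by
  classical
  let c : ℕ → ℝ := fun n => ⟪x, v n⟫_ℝ
  let d : ℕ → ℝ := fun n => ⟪z, v n⟫_ℝ
  let a : ℕ → ℝ := fun n => (σ n ^ 2)⁻¹ * softThresh α (σ n * ⟪K x, u n⟫_ℝ)
  have hKu : ∀ (w : X) (n : ℕ), ⟪K w, u n⟫_ℝ = σ n * ⟪w, v n⟫_ℝ := by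
    intro w n
    rw [← ContinuousLinearMap.adjoint_inner_right, hKadj n, real_inner_smul_right]
  have hcd : ∀ n, c n = σ n ^ 2 * d n := by
    intro n
    show ⟪x, v n⟫_ℝ = σ n ^ 2 * ⟪z, v n⟫_ℝ
    rw [hx, ContinuousLinearMap.adjoint_inner_left, hKv n, real_inner_smul_right, hKu z n]
    ring
  have ht : ∀ n, σ n * ⟪K x, u n⟫_ℝ = σ n ^ 2 * c n := by
    intro n
    rw [hKu x n]; ring
  have hσ2 : ∀ n, (0:ℝ) < σ n ^ 2 := fun n => pow_pos (hσ n) 2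
  have key : ∀ n, |a n - c n| ≤ c₂ * α * |d n| := by
    intro n
    have h1 : a n - c n = (σ n ^ 2)⁻¹ * (softThresh α (σ n ^ 2 * c n) - σ n ^ 2 * c n) := by
      show (σ n ^ 2)⁻¹ * softThresh α (σ n * ⟪K x, u n⟫_ℝ) - c n = _
      rw [ht n, mul_sub, ← mul_assoc, inv_mul_cancel₀ (hσ2 n).ne', one_mul]
    rw [h1, abs_mul, abs_inv, abs_of_pos (hσ2 n)]
    have h2 : |softThresh α (σ n ^ 2 * c n) - σ n ^ 2 * c n| ≤ |σ n ^ 2 * c n| :=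
      abs_softThresh_sub_le α _ hα.le
    have h3 : (σ n ^ 2)⁻¹ * |softThresh α (σ n ^ 2 * c n) - σ n ^ 2 * c n| ≤ |c n| := by
      rw [abs_mul, abs_of_pos (hσ2 n)] at h2
      calc (σ n ^ 2)⁻¹ * |softThresh α (σ n ^ 2 * c n) - σ n ^ 2 * c n|
          ≤ (σ n ^ 2)⁻¹ * (σ n ^ 2 * |c n|) :=
            mul_le_mul_of_nonneg_left h2 (inv_nonneg.mpr (hσ2 n).le)
        _ = |c n| := by rw [inv_mul_cancel_left₀ (hσ2 n).ne']
    refine h3.trans ?_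
    rw [hcd n, abs_mul, abs_of_pos (hσ2 n)]
    exact mul_le_mul_of_nonneg_right (hσb n) (abs_nonneg _)
  -- summability of d in ℓ²
  have hdsum : Summable fun n => |d n| ^ 2 := by
    have := hv.inner_products_summable (x := z)
    simpa [d, Real.norm_eq_abs, real_inner_comm] using this
  have hdle : ∑' n, |d n| ^ 2 ≤ ‖z‖ ^ 2 := by
    have := hv.tsum_inner_products_le (x := z)
    simpa [d, Real.norm_eq_abs, real_inner_comm] using this
  -- orthogonal family machinery
  have OF : OrthogonalFamily ℝ (fun _ : ℕ => ℝ)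
      (fun i => LinearIsometry.toSpanSingleton ℝ X (hv.1 i)) := hv.orthogonalFamily
  have hxmem : x ∈ LinearMap.range OF.linearIsometry.toLinearMap := by
    rw [OF.range_linearIsometry]
    have h1 : x ∈ (LinearMap.range ((ContinuousLinearMap.adjoint K : Y →L[ℝ] X) : Y →ₗ[ℝ] X)).topologicalClosure :=
      Submodule.le_topologicalClosure _ ⟨K z, hx.symm⟩
    rw [← hvspan] at h1
    have h2 : (⨆ i, LinearMap.range
        (LinearIsometry.toSpanSingleton ℝ X (hv.1 i)).toLinearMap)
        = Submodule.span ℝ (Set.range v) := by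
      rw [Submodule.span_range_eq_iSup]
      congr 1
      funext i
      rw [LinearIsometry.coe_toSpanSingleton (hv.1 i),
        ← LinearMap.span_singleton_eq_range]
    rw [h2]
    exact h1
  obtain ⟨f, hfx⟩ := hxmem
  have hsx : HasSum (fun i => (f i : ℝ) • v i) x := by
    have := OF.hasSum_linearIsometry f
    rw [LinearIsometry.coe_toLinearMap] at hfx
    simpa [LinearIsometry.toSpanSingleton_apply, hfx] using this
  have hvi := orthonormal_iff_ite.mp hv
  have hf : ∀ n, (f n : ℝ) = c n := by
    intro n
    have h2 : HasSum (fun i => ⟪v n, (f i : ℝ) • v i⟫_ℝ) ⟪v n, x⟫_ℝ :=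
      (innerSL ℝ (v n)).hasSum hsx
    have h3 : HasSum (fun i => if i = n then (f n : ℝ) else 0) ⟪v n, x⟫_ℝ := by
      convert h2 using 1
      funext i
      rw [real_inner_smul_right, hvi n i]
      rcases eq_or_ne i n with rfl | h
      · simp
      · simp [h, Ne.symm h]
    have h4 := h3.unique (hasSum_ite_eq n ((f n : ℝ)))
    rw [← h4]
    exact real_inner_comm _ _
  have hsx' : HasSum (fun i => c i • v i) x := by
    have he : (fun i => c i • v i) = fun i => (f i : ℝ) • v i := by
      funext i; rw [hf i]
    rw [he]; exact hsx
  -- exponent conversion helper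
  have h6 : ∀ t : ℝ, t ^ ((2 : ENNReal)).toReal = t ^ (2 : ℕ) := by
    intro t
    rw [ENNReal.toReal_ofNat, show (2:ℝ) = ((2:ℕ):ℝ) by norm_num, Real.rpow_natCast]
  have h5 : Summable fun n => ‖a n - c n‖ ^ (2 : ℕ) := by
    have h4' : Summable fun n => (c₂ * α) ^ 2 * |d n| ^ 2 := hdsum.mul_left _
    apply h4'.of_nonneg_of_le (fun n => by positivity)
    intro n
    rw [Real.norm_eq_abs, ← mul_pow]
    exact pow_le_pow_left₀ (abs_nonneg _) (key n) 2
  have hg2 : Memℓp (fun n => a n - c n) 2 := by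
    apply memℓp_gen
    exact h5.congr fun n => (h6 _).symm
  let g : lp (fun _ : ℕ => ℝ) 2 := ⟨fun n => a n - c n, hg2⟩
  have hsg : HasSum (fun i => (a i - c i) • v i) (OF.linearIsometry g) := by
    have := OF.hasSum_linearIsometry g
    simpa [g, LinearIsometry.toSpanSingleton_apply] using this
  have hsa : HasSum (fun i => a i • v i) (OF.linearIsometry g + x) := by
    have h := hsg.add hsx'
    convert h using 1
    funext i
    rw [sub_smul, sub_add_cancel]
  have htsum : (∑' n, ((σ n ^ 2)⁻¹ * softThresh α (σ n * ⟪K x, u n⟫_ℝ)) • v n)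
      = OF.linearIsometry g + x := hsa.tsum_eq
  rw [htsum, add_sub_cancel_right, OF.linearIsometry.norm_map g]
  apply lp.norm_le_of_tsum_le (by norm_num) (by positivity)
  have hgi : ∀ i, ‖(g : ∀ _ : ℕ, ℝ) i‖ = |a i - c i| := fun i => rfl
  calc ∑' i, ‖(g : ∀ _ : ℕ, ℝ) i‖ ^ ((2:ENNReal)).toReal
      = ∑' i, |a i - c i| ^ (2:ℕ) := by
        congr 1; funext i; rw [h6, hgi i]
    _ ≤ ∑' i, (c₂ * α) ^ 2 * |d i| ^ 2 := by
        apply Summable.tsum_le_tsum _ _ (hdsum.mul_left _)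
        · intro i
          rw [← mul_pow]
          exact pow_le_pow_left₀ (abs_nonneg _) (key i) 2
        · exact h5.congr fun n => by rw [Real.norm_eq_abs]
    _ = (c₂ * α) ^ 2 * ∑' i, |d i| ^ 2 := tsum_mul_left
    _ ≤ (c₂ * α) ^ 2 * ‖z‖ ^ 2 := by
        exact mul_le_mul_of_nonneg_left hdle (by positivity)
    _ = (c₂ * α * ‖z‖) ^ ((2:ENNReal)).toReal := by
        rw [h6]; ring
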